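/- Let G0 be the triangulation of the (non-convex) polyomino with cell set C = {(0,0),(0,1),(0,2),(1,0),(1,2),(2,1),(2,2)} obtained by adding to each cell (i,j) ∈ C the anti-diagonal edge {(i+1,j),(i,j+1)}, except for the cell (2,1), which instead receives the main diagonal edge {(2,1),(3,2)}. Then G0 is word-representable but not 3-colorable. -/

import Mathlib

/-- Two letters `x` and `y` alternate in the word `w` if the subsequence of `w`
consisting of all occurrences of `x` and `y` has no two consecutive equal letters. -/
def Alternates {V : Type*} [DecidableEq V] (w : List V) (x y : V) : Prop :=
  (w.filter fun z => decide (z = x ∨ z = y)).Chain' (· ≠ ·)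

/-- A word `w` represents the graph `G`: every vertex occurs in `w`, and two distinct
letters alternate in `w` iff they are adjacent in `G`. -/
def Represents {V : Type*} [DecidableEq V] (G : SimpleGraph V) (w : List V) : Prop :=
  (∀ v : V, v ∈ w) ∧ ∀ x y : V, x ≠ y → (Alternates w x y ↔ G.Adj x y)

/-- A graph is word-representable if some word represents it. -/
def WordRepresentable {V : Type*} [DecidableEq V] (G : SimpleGraph V) : Prop :=
  ∃ w : List V, Represents G w
/-- Two cells of `ℤ²` are edge-adjacent. -/
def CellAdj (a b : ℤ × ℤ) : Prop :=
  (a.1 - b.1).natAbs + (a.2 - b.2).natAbs = 1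

/-- A polyomino: a finite nonempty set of cells, connected under edge-adjacency. -/
def IsPolyomino (P : Finset (ℤ × ℤ)) : Prop :=
  P.Nonempty ∧ ∀ a ∈ P, ∀ b ∈ P,
    Relation.ReflTransGen (fun x y => x ∈ P ∧ y ∈ P ∧ CellAdj x y) a b

/-- The vertex set of a polyomino: all corners of its cells. -/
def polyVerts (P : Finset (ℤ × ℤ)) : Finset (ℤ × ℤ) :=
  P.biUnion fun c => {(c.1, c.2), (c.1 + 1, c.2), (c.1, c.2 + 1), (c.1 + 1, c.2 + 1)}

/-- The (ordered) pair `(u, v)` forms one of the four sides of the cell `c`. -/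
def IsSideOf (c u v : ℤ × ℤ) : Prop :=
  (u = (c.1, c.2) ∧ v = (c.1 + 1, c.2)) ∨
  (u = (c.1, c.2 + 1) ∧ v = (c.1 + 1, c.2 + 1)) ∨
  (u = (c.1, c.2) ∧ v = (c.1, c.2 + 1)) ∨
  (u = (c.1 + 1, c.2) ∧ v = (c.1 + 1, c.2 + 1))

/-- The triangulation of the polyomino `P` determined by the choice `d` of a diagonal
for each cell: all sides of cells of `P`, plus for each cell `c ∈ P` the main diagonal
`{c, c+(1,1)}` if `d c = 0` and the anti-diagonal `{c+(1,0), c+(0,1)}` if `d c = 1`. -/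
def PolyTri (P : Finset (ℤ × ℤ)) (d : ℤ × ℤ → Fin 2) :
    SimpleGraph {v : ℤ × ℤ // v ∈ polyVerts P} :=
  SimpleGraph.fromRel fun u v =>
    (∃ c ∈ P, IsSideOf c u.val v.val) ∨
    (∃ c ∈ P, (d c = 0 ∧ u.val = (c.1, c.2) ∧ v.val = (c.1 + 1, c.2 + 1)) ∨
              (d c = 1 ∧ u.val = (c.1 + 1, c.2) ∧ v.val = (c.1, c.2 + 1)))

/-- The cell set of the non-convex polyomino on 7 squares (a 3×3 square of cells with
the cells (1,1) and (2,0) removed). -/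
def P₀ : Finset (ℤ × ℤ) :=
  {(0, 0), (0, 1), (0, 2), (1, 0), (1, 2), (2, 1), (2, 2)}

/-- The diagonal choice: every cell receives the anti-diagonal, except the cell
`(2,1)`, which receives the main diagonal `{(2,1),(3,2)}`. -/
def d₀ : ℤ × ℤ → Fin 2 := fun c => if c = (2, 1) then 0 else 1

/-- The corresponding triangulation of the polyomino `P₀`. -/
def G₀ : SimpleGraph {v : ℤ × ℤ // v ∈ polyVerts P₀} := PolyTri P₀ d₀


/-! ### Auxiliary material -/

instance instDecIsSideOf (c u v : ℤ × ℤ) : Decidable (IsSideOf c u v) :=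
  inferInstanceAs (Decidable
    ((u = (c.1, c.2) ∧ v = (c.1 + 1, c.2)) ∨
     (u = (c.1, c.2 + 1) ∧ v = (c.1 + 1, c.2 + 1)) ∨
     (u = (c.1, c.2) ∧ v = (c.1, c.2 + 1)) ∨
     (u = (c.1 + 1, c.2) ∧ v = (c.1 + 1, c.2 + 1))))

/-- The base relation defining `G₀`. -/
def R₀ (u v : {v : ℤ × ℤ // v ∈ polyVerts P₀}) : Prop :=
  (∃ c ∈ P₀, IsSideOf c u.val v.val) ∨
  (∃ c ∈ P₀, (d₀ c = 0 ∧ u.val = (c.1, c.2) ∧ v.val = (c.1 + 1, c.2 + 1)) ∨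
             (d₀ c = 1 ∧ u.val = (c.1 + 1, c.2) ∧ v.val = (c.1, c.2 + 1)))

instance instDecR₀ : DecidableRel R₀ := fun u v =>
  inferInstanceAs (Decidable
    ((∃ c ∈ P₀, IsSideOf c u.val v.val) ∨
     (∃ c ∈ P₀, (d₀ c = 0 ∧ u.val = (c.1, c.2) ∧ v.val = (c.1 + 1, c.2 + 1)) ∨
                (d₀ c = 1 ∧ u.val = (c.1 + 1, c.2) ∧ v.val = (c.1, c.2 + 1)))))

lemma G₀_adj_iff (u v : {v : ℤ × ℤ // v ∈ polyVerts P₀}) :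
    G₀.Adj u v ↔ u ≠ v ∧ (R₀ u v ∨ R₀ v u) :=
  SimpleGraph.fromRel_adj _ u v

instance instDecG₀Adj : DecidableRel G₀.Adj := fun u v =>
  decidable_of_iff _ (G₀_adj_iff u v).symm

/-- A kernel-reducible decision procedure for `List.Chain`. -/
def decChain {α : Type*} {R : α → α → Prop} [DecidableRel R] :
    ∀ (a : α) (l : List α), Decidable (List.Chain R a l)
  | _, [] => isTrue List.Chain.nil
  | a, b :: l =>
    @decidable_of_iff _ _ List.chain_cons.symm (@instDecidableAnd _ _ _ (decChain b l))

/-- A kernel-reducible decision procedure for `List.Chain'`. -/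
def decChain' {α : Type*} {R : α → α → Prop} [DecidableRel R] :
    ∀ l : List α, Decidable (List.Chain' R l)
  | [] => isTrue List.IsChain.nil
  | a :: l => decChain a l

instance instDecAlternates {V : Type*} [DecidableEq V] (w : List V) (x y : V) :
    Decidable (Alternates w x y) :=
  @decChain' _ _ (fun a b => instDecidableNot) (w.filter fun z => decide (z = x ∨ z = y))

instance instDecRepresents {V : Type*} [DecidableEq V] [Fintype V] (G : SimpleGraph V)
    [DecidableRel G.Adj] (w : List V) : Decidable (Represents G w) :=
  inferInstanceAs (Decidable
    ((∀ v : V, v ∈ w) ∧ ∀ x y : V, x ≠ y → (Alternates w x y ↔ G.Adj x y)))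

/-- The underlying list of corners of a word representing `G₀`. -/
def rawWord₀ : List (ℤ × ℤ) :=
  [(3, 3), (2, 3), (1, 3), (0, 3), (3, 2), (3, 3), (0, 0), (2, 2), (3, 1), (1, 2), (2, 3), (2, 1), (3, 2), (3, 3), (1, 3), (2, 2), (0, 2), (0, 3), (1, 1), (1, 2), (2, 3), (0, 1), (3, 1), (0, 2), (2, 0), (1, 3), (2, 1), (1, 0), (1, 1), (3, 2), (3, 3), (2, 0), (2, 2), (3, 1), (2, 3), (2, 1), (3, 2), (0, 3), (3, 1)]

/-- The word representing `G₀`. -/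
def w₀ : List {v : ℤ × ℤ // v ∈ polyVerts P₀} :=
  rawWord₀.pmap (fun v h => ⟨v, h⟩) (by decide)

set_option maxHeartbeats 4000000 in
lemma w₀_represents : Represents G₀ w₀ := by decide

/-- Eleven values in `{0,1,2}` cannot satisfy the listed disequalities (the core of
the non-3-colorability of `G₀`). -/
lemma aux3 (a b c d e f g h i j k : ℕ)
    (ha : a < 3) (hb : b < 3) (hc : c < 3) (hd : d < 3) (he : e < 3) (hf : f < 3)
    (hg : g < 3) (hh : h < 3) (hi : i < 3) (hj : j < 3) (hk : k < 3)
    (h1 : a ≠ b) (h2 : a ≠ c) (h3 : a ≠ d) (h4 : b ≠ d) (h5 : b ≠ e) (h6 : c ≠ d)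
    (h7 : c ≠ g) (h8 : d ≠ g) (h9 : d ≠ h) (h10 : e ≠ f) (h11 : e ≠ i) (h12 : f ≠ i)
    (h13 : f ≠ j) (h14 : g ≠ h) (h15 : h ≠ i) (h16 : h ≠ k) (h17 : i ≠ j)
    (h18 : i ≠ k) (h19 : j ≠ k) : False := by omega

def vA : {v : ℤ × ℤ // v ∈ polyVerts P₀} := ⟨(0, 1), by decide⟩
def vB : {v : ℤ × ℤ // v ∈ polyVerts P₀} := ⟨(0, 2), by decide⟩
def vC : {v : ℤ × ℤ // v ∈ polyVerts P₀} := ⟨(1, 0), by decide⟩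
def vD : {v : ℤ × ℤ // v ∈ polyVerts P₀} := ⟨(1, 1), by decide⟩
def vE : {v : ℤ × ℤ // v ∈ polyVerts P₀} := ⟨(1, 2), by decide⟩
def vF : {v : ℤ × ℤ // v ∈ polyVerts P₀} := ⟨(1, 3), by decide⟩
def vG : {v : ℤ × ℤ // v ∈ polyVerts P₀} := ⟨(2, 0), by decide⟩
def vH : {v : ℤ × ℤ // v ∈ polyVerts P₀} := ⟨(2, 1), by decide⟩
def vI : {v : ℤ × ℤ // v ∈ polyVerts P₀} := ⟨(2, 2), by decide⟩
def vJ : {v : ℤ × ℤ // v ∈ polyVerts P₀} := ⟨(2, 3), by decide⟩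
def vK : {v : ℤ × ℤ // v ∈ polyVerts P₀} := ⟨(3, 2), by decide⟩

lemma G₀_not_colorable : ¬ G₀.Colorable 3 := by
  rintro ⟨C⟩
  have val_ne : ∀ u v, G₀.Adj u v → (C u).val ≠ (C v).val := fun u v h hv =>
    C.valid h (Fin.val_injective hv)
  exact aux3 (C vA).val (C vB).val (C vC).val (C vD).val (C vE).val (C vF).val
    (C vG).val (C vH).val (C vI).val (C vJ).val (C vK).val
    (C vA).isLt (C vB).isLt (C vC).isLt (C vD).isLt (C vE).isLt (C vF).isLt
    (C vG).isLt (C vH).isLt (C vI).isLt (C vJ).isLt (C vK).isLt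
    (val_ne _ _ (by decide)) (val_ne _ _ (by decide)) (val_ne _ _ (by decide))
    (val_ne _ _ (by decide)) (val_ne _ _ (by decide)) (val_ne _ _ (by decide))
    (val_ne _ _ (by decide)) (val_ne _ _ (by decide)) (val_ne _ _ (by decide))
    (val_ne _ _ (by decide)) (val_ne _ _ (by decide)) (val_ne _ _ (by decide))
    (val_ne _ _ (by decide)) (val_ne _ _ (by decide)) (val_ne _ _ (by decide))
    (val_ne _ _ (by decide)) (val_ne _ _ (by decide)) (val_ne _ _ (by decide))
    (val_ne _ _ (by decide))

/-- The triangulation `G₀` of the non-convex polyomino `P₀` is word-representable but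
not 3-colorable. -/
theorem G₀_wordRepresentable_not_colorable :
    WordRepresentable G₀ ∧ ¬ G₀.Colorable 3 :=
  ⟨⟨w₀, w₀_represents⟩, G₀_not_colorable⟩
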